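/- An oriented subgraph T of a map G on an orientable surface is partitionable (its edge set partitions into three pairwise homologous sets T_0, T_1, T_2) if and only if it is a topological Tutte-orientation (β(T,W) ≡ 0 (mod 3) for every closed walk W of the dual G*). -/

import Mathlib

/-!
Combinatorial framework for flows and homology on a map on an orientable surface.

* A `Multigraph` is a set of edges with a fixed reference orientation (source/target);
  flows on it are elements of ℤ^E.
* A dart is an edge together with a direction of traversal (`true` = forward).
* `charFlow l` is the characteristic flow of a list of darts (a walk):
  #forward traversals − #backward traversals of each edge.
* `beta p q = Σ_e p_e q_{e*}` is the pairing between flows on G and flows on its dual G*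
  (dual flows are indexed by the same edge set via e ↦ e*).
* A `SurfaceMap` records, for each edge, the faces on its left and right, and for each
  face its counterclockwise facial walk; the dual graph G* has the faces as vertices and
  e* oriented from the face on the right of e to the face on the left.
* `GoodFacialWalks` is the defining geometric property of the ccw facial walks:
  the ccw facial walk of a face f uses e forward iff f is on the left of e.
* Two flows are homologous iff their difference lies in the subgroup generated by the
  characteristic flows of the ccw facial walks.
-/

structure Multigraph (V E : Type) where
  src : E → V
  tgt : E → V

namespace Multigraph

variable {V E : Type}

def dtail (M : Multigraph V E) (d : E × Bool) : V := if d.2 then M.src d.1 else M.tgt d.1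

def dhead (M : Multigraph V E) (d : E × Bool) : V := if d.2 then M.tgt d.1 else M.src d.1

/-- A closed walk: a nonempty list of darts, consecutively chained, wrapping around. -/
def IsClosedWalk (M : Multigraph V E) (l : List (E × Bool)) : Prop :=
  l ≠ [] ∧ l.Chain' (fun d d' => M.dhead d = M.dtail d') ∧
    ∀ d ∈ l.head?, ∀ d' ∈ l.getLast?, M.dhead d' = M.dtail d

end Multigraph

/-- Characteristic flow of a walk (list of darts). -/
def charFlow {E : Type} [DecidableEq E] (l : List (E × Bool)) : E → ℤ :=
  fun e => (l.count (e, true) : ℤ) - (l.count (e, false) : ℤ)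

/-- The bilinear pairing β between flows of G and flows of G*. -/
def beta {E : Type} [Fintype E] (p q : E → ℤ) : ℤ := ∑ e, p e * q e

structure SurfaceMap (V E F : Type) where
  G : Multigraph V E
  leftFace : E → F
  rightFace : E → F
  /-- the counterclockwise facial walk of each face -/
  facialWalk : F → List (E × Bool)

namespace SurfaceMap

variable {V E F : Type}

/-- The dual map G*: vertices are the faces of G, and e* goes from the face on the
right of e to the face on the left of e. -/
def dual (M : SurfaceMap V E F) : Multigraph F E := ⟨M.rightFace, M.leftFace⟩

/-- The subgroup 𝔽 of ℤ^E generated by the ccw facial flows. -/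
def FacialSubgroup [DecidableEq E] (M : SurfaceMap V E F) : AddSubgroup (E → ℤ) :=
  AddSubgroup.closure (Set.range fun f => charFlow (M.facialWalk f))

/-- Two flows are homologous iff their difference lies in 𝔽. -/
def Homologous [DecidableEq E] (M : SurfaceMap V E F) (p q : E → ℤ) : Prop :=
  p - q ∈ M.FacialSubgroup

/-- Geometric defining property of the ccw facial walks. -/
def GoodFacialWalks [DecidableEq E] [DecidableEq F] (M : SurfaceMap V E F) : Prop :=
  (∀ f, M.G.IsClosedWalk (M.facialWalk f)) ∧
  ∀ f e, charFlow (M.facialWalk f) e =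
    (if M.leftFace e = f then 1 else 0) - (if M.rightFace e = f then 1 else 0)

end SurfaceMap

/-- An oriented subgraph of G, identified with its characteristic flow in {-1,0,1}^E. -/
def IsSubgraphFlow {E : Type} (T : E → ℤ) : Prop := ∀ e, T e = -1 ∨ T e = 0 ∨ T e = 1

/-- T is partitionable: its edge set splits into three pairwise homologous oriented
subgraphs T₀, T₁, T₂. -/
def Partitionable {V E F : Type} [DecidableEq E] (M : SurfaceMap V E F) (T : E → ℤ) : Prop :=
  ∃ T0 T1 T2 : E → ℤ, IsSubgraphFlow T0 ∧ IsSubgraphFlow T1 ∧ IsSubgraphFlow T2 ∧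
    (∀ e, T e = T0 e + T1 e + T2 e) ∧
    (∀ e, (T0 e = 0 ∧ T1 e = 0) ∨ (T0 e = 0 ∧ T2 e = 0) ∨ (T1 e = 0 ∧ T2 e = 0)) ∧
    M.Homologous T0 T1 ∧ M.Homologous T1 T2

/-- T is a topological Tutte-orientation: β(T,W) ≡ 0 (mod 3) for every closed walk W of G*
(the number of edges crossing W from left to right minus right to left is divisible by 3). -/
def IsTopologicalTutte {V E F : Type} [Fintype E] [DecidableEq E]
    (M : SurfaceMap V E F) (T : E → ℤ) : Prop :=
  ∀ W, M.dual.IsClosedWalk W → beta T (charFlow W) ≡ 0 [ZMOD 3]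

/-! ### Auxiliary development -/

namespace Multigraph

variable {V E : Type}

/-- A (possibly empty) walk from `a` to `b`. -/
def IsWalk (M : Multigraph V E) : V → V → List (E × Bool) → Prop
  | a, b, [] => a = b
  | a, b, d :: l => M.dtail d = a ∧ M.IsWalk (M.dhead d) b l

theorem IsWalk.append {M : Multigraph V E} :
    ∀ {l : List (E × Bool)} {a b : V} {l' : List (E × Bool)} {c : V},
      M.IsWalk a b l → M.IsWalk b c l' → M.IsWalk a c (l ++ l')
  | [], a, b, l', c, h, h' => by
      simp only [IsWalk] at h; subst h; simpa using h'
  | d :: t, a, b, l', c, h, h' => by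
      obtain ⟨h1, h2⟩ := h
      exact ⟨h1, IsWalk.append h2 h'⟩

/-- Flip a dart. -/
def flipDart (d : E × Bool) : E × Bool := (d.1, !d.2)

theorem flipDart_involutive : Function.Involutive (flipDart (E := E)) := by
  intro d; simp [flipDart]

theorem flipDart_injective : Function.Injective (flipDart (E := E)) :=
  flipDart_involutive.injective

/-- Reverse of a walk. -/
def revWalk (l : List (E × Bool)) : List (E × Bool) := (l.map flipDart).reverse

@[simp] theorem revWalk_nil : revWalk ([] : List (E × Bool)) = [] := rfl

theorem revWalk_cons (d : E × Bool) (l : List (E × Bool)) :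
    revWalk (d :: l) = revWalk l ++ [flipDart d] := by
  simp [revWalk]

@[simp] theorem dtail_flipDart (M : Multigraph V E) (d : E × Bool) :
    M.dtail (flipDart d) = M.dhead d := by
  rcases d with ⟨e, b⟩; cases b <;> simp [flipDart, dtail, dhead]

@[simp] theorem dhead_flipDart (M : Multigraph V E) (d : E × Bool) :
    M.dhead (flipDart d) = M.dtail d := by
  rcases d with ⟨e, b⟩; cases b <;> simp [flipDart, dtail, dhead]

theorem IsWalk.rev {M : Multigraph V E} :
    ∀ {l : List (E × Bool)} {a b : V}, M.IsWalk a b l → M.IsWalk b a (revWalk l)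
  | [], a, b, h => by
      simp only [IsWalk] at h; subst h; exact rfl
  | d :: t, a, b, h => by
      obtain ⟨h1, h2⟩ := h
      rw [revWalk_cons]
      exact IsWalk.append (IsWalk.rev h2) ⟨by simp, by simp [IsWalk, h1]⟩

theorem IsWalk.chain' {M : Multigraph V E} :
    ∀ {l : List (E × Bool)} {a b : V}, M.IsWalk a b l →
      l.Chain' (fun d d' => M.dhead d = M.dtail d')
  | [], a, b, _ => List.isChain_nil
  | [d], a, b, _ => List.isChain_singleton _
  | d :: d' :: t, a, b, h => by
      obtain ⟨h1, h2, h3⟩ := h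
      exact List.isChain_cons_cons.2 ⟨h2.symm, IsWalk.chain' (l := d' :: t) ⟨h2, h3⟩⟩

theorem IsWalk.head? {M : Multigraph V E} :
    ∀ {l : List (E × Bool)} {a b : V}, M.IsWalk a b l →
      ∀ d ∈ l.head?, M.dtail d = a
  | [], a, b, _ => by simp
  | d :: t, a, b, h => by
      obtain ⟨h1, _⟩ := h
      intro d' hd'
      simp only [List.head?_cons, Option.mem_def, Option.some.injEq] at hd'
      subst hd'; exact h1

theorem IsWalk.getLast? {M : Multigraph V E} :
    ∀ {l : List (E × Bool)} {a b : V}, M.IsWalk a b l →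
      ∀ d ∈ l.getLast?, M.dhead d = b
  | [], a, b, _ => by simp
  | [d], a, b, h => by
      obtain ⟨_, h2⟩ := h
      simp only [IsWalk] at h2
      intro d' hd'
      simp only [List.getLast?_singleton, Option.mem_def, Option.some.injEq] at hd'
      subst hd'; exact h2
  | d :: d' :: t, a, b, h => by
      obtain ⟨h1, h2⟩ := h
      intro x hx
      rw [List.getLast?_cons_cons] at hx
      exact IsWalk.getLast? h2 x hx

theorem IsWalk.isClosedWalk {M : Multigraph V E} {l : List (E × Bool)} {a : V}
    (h : M.IsWalk a a l) (hne : l ≠ []) : M.IsClosedWalk l := by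
  refine ⟨hne, h.chain', ?_⟩
  intro d hd d' hd'
  rw [h.getLast? d' hd', h.head? d hd]

/-- Reachability in a multigraph, as a setoid. -/
def reachSetoid (M : Multigraph V E) : Setoid V :=
  ⟨fun a b => ∃ l, M.IsWalk a b l,
    fun _ => ⟨[], rfl⟩,
    fun ⟨l, h⟩ => ⟨revWalk l, h.rev⟩,
    fun ⟨_, h⟩ ⟨_, h'⟩ => ⟨_, h.append h'⟩⟩

end Multigraph

section CharFlowBeta
set_option linter.unusedSectionVars false

variable {E : Type} [DecidableEq E]

theorem charFlow_append (l l' : List (E × Bool)) :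
    charFlow (l ++ l') = charFlow l + charFlow l' := by
  funext e; simp [charFlow, List.count_append]; ring

theorem charFlow_revWalk (l : List (E × Bool)) :
    charFlow (Multigraph.revWalk l) = -charFlow l := by
  induction l with
  | nil => funext e; simp [charFlow, Multigraph.revWalk]
  | cons d l ih =>
    rw [Multigraph.revWalk_cons, charFlow_append, ih]
    funext e
    rcases d with ⟨a, b⟩
    simp only [Pi.add_apply, Pi.neg_apply, charFlow, Multigraph.flipDart,
      List.count_cons, List.count_nil]
    cases b <;> simp [Prod.ext_iff] <;> push_cast <;> ring

variable [Fintype E]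

theorem beta_add_left (p q c : E → ℤ) : beta (p + q) c = beta p c + beta q c := by
  simp [beta, add_mul, Finset.sum_add_distrib]

theorem beta_neg_left (p c : E → ℤ) : beta (-p) c = -beta p c := by
  simp [beta, Finset.sum_neg_distrib]

theorem beta_zero_left (c : E → ℤ) : beta 0 c = 0 := by simp [beta]

theorem beta_sub_left (p q c : E → ℤ) : beta (p - q) c = beta p c - beta q c := by
  simp [beta, sub_mul, Finset.sum_sub_distrib]

theorem beta_add_right (p c c' : E → ℤ) : beta p (c + c') = beta p c + beta p c' := by
  simp [beta, mul_add, Finset.sum_add_distrib]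

theorem beta_neg_right (p c : E → ℤ) : beta p (-c) = -beta p c := by
  simp [beta, Finset.sum_neg_distrib]

/-- β against the characteristic flow of a walk is a signed sum over the darts. -/
theorem beta_charFlow (p : E → ℤ) :
    ∀ l : List (E × Bool),
      beta p (charFlow l) = (l.map fun d => if d.2 then p d.1 else -p d.1).sum
  | [] => by simp [beta, charFlow]
  | d :: l => by
      have hsingle : ∀ e : E, charFlow (d :: l) e
          = charFlow l e + ((if d = (e, true) then (1:ℤ) else 0)
              - (if d = (e, false) then (1:ℤ) else 0)) := by
        intro e
        simp [charFlow, List.count_cons]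
        push_cast
        ring
      have : beta p (charFlow (d :: l))
          = beta p (charFlow l)
            + ∑ e, p e * ((if d = (e, true) then (1:ℤ) else 0)
                - (if d = (e, false) then (1:ℤ) else 0)) := by
        simp only [beta]
        rw [← Finset.sum_add_distrib]
        refine Finset.sum_congr rfl fun e _ => by rw [hsingle e]; ring
      rw [this, beta_charFlow p l]
      rcases d with ⟨a, b⟩
      cases b <;>
        simp [Prod.ext_iff, mul_ite, Finset.sum_sub_distrib, Finset.sum_ite_eq', add_comm]

theorem beta_charFlow_single (p : E → ℤ) (e : E) :
    beta p (charFlow [(e, true)]) = p e := by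
  simp [beta_charFlow]

end CharFlowBeta

/-- Telescoping sum along a chained list. -/
theorem telescope_chain {D : Type*} (A B : D → ℤ) :
    ∀ l : List D, l.Chain' (fun d d' => A d = B d') →
      ∀ d0 ∈ l.head?, ∀ dn ∈ l.getLast?,
        (l.map fun d => A d - B d).sum = A dn - B d0
  | [], _, d0, h0, dn, hn => by simp at h0
  | [d], _, d0, h0, dn, hn => by
      simp only [List.head?_cons, List.getLast?_singleton, Option.mem_def,
        Option.some.injEq] at h0 hn
      subst h0; subst hn; simp
  | d :: d' :: t, hch, d0, h0, dn, hn => by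
      simp only [List.head?_cons, Option.mem_def, Option.some.injEq] at h0
      subst h0
      rw [List.getLast?_cons_cons] at hn
      obtain ⟨h1, h2⟩ := List.isChain_cons_cons.1 hch
      have ih := telescope_chain A B (d' :: t) h2 d' (by simp) dn hn
      rw [List.map_cons, List.sum_cons, ih, ← h1]
      ring


section Facial

variable {V E F : Type} [Fintype E] [DecidableEq E] [DecidableEq F]

/-- β of a facial flow against the characteristic flow of a closed dual walk is 0. -/
theorem beta_facialWalk_closed (M : SurfaceMap V E F) (hM : M.GoodFacialWalks)
    (f : F) {W : List (E × Bool)} (hW : M.dual.IsClosedWalk W) :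
    beta (charFlow (M.facialWalk f)) (charFlow W) = 0 := by
  obtain ⟨hne, hch, hcl⟩ := hW
  rw [beta_charFlow]
  have hterm : ∀ d : E × Bool,
      (if d.2 then charFlow (M.facialWalk f) d.1 else -charFlow (M.facialWalk f) d.1)
        = (if M.dual.dhead d = f then (1:ℤ) else 0)
          - (if M.dual.dtail d = f then (1:ℤ) else 0) := by
    rintro ⟨e, b⟩
    cases b <;>
      simp [hM.2 f e, SurfaceMap.dual, Multigraph.dhead, Multigraph.dtail] <;> ring
  rw [List.map_congr_left fun d _ => hterm d]
  set A : E × Bool → ℤ := fun d => if M.dual.dhead d = f then 1 else 0 with hA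
  set B : E × Bool → ℤ := fun d => if M.dual.dtail d = f then 1 else 0 with hB
  have hch' : W.Chain' (fun d d' => A d = B d') :=
    hch.imp fun d d' h => by simp only [hA, hB, h]
  obtain ⟨d0, t, rfl⟩ : ∃ d0 t, W = d0 :: t := by
    cases W with
    | nil => exact absurd rfl hne
    | cons d t => exact ⟨d, t, rfl⟩
  obtain ⟨dn, hn⟩ : ∃ dn, (d0 :: t).getLast? = some dn := by
    cases h : (d0 :: t).getLast? with
    | none => exact absurd (List.getLast?_eq_none_iff.1 h) (by simp)
    | some dn => exact ⟨dn, rfl⟩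
  have htel := telescope_chain A B (d0 :: t) hch' d0 (by simp) dn hn
  have hclose : M.dual.dhead dn = M.dual.dtail d0 := hcl d0 (by simp) dn hn
  rw [htel]
  simp only [hA, hB, hclose]
  ring

/-- β of any element of the facial subgroup against a closed dual walk is 0. -/
theorem beta_facialSubgroup_closed (M : SurfaceMap V E F) (hM : M.GoodFacialWalks)
    {g : E → ℤ} (hg : g ∈ M.FacialSubgroup)
    {W : List (E × Bool)} (hW : M.dual.IsClosedWalk W) :
    beta g (charFlow W) = 0 := by
  induction hg using AddSubgroup.closure_induction with
  | mem x hx => obtain ⟨f, rfl⟩ := hx; exact beta_facialWalk_closed M hM f hW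
  | zero => exact beta_zero_left _
  | add x y _ _ hx hy => rw [beta_add_left, hx, hy, add_zero]
  | neg x _ hx => rw [beta_neg_left, hx, neg_zero]

end Facial


section AuxCases

theorem aux_sum (t : ℤ) (ht : t = -1 ∨ t = 0 ∨ t = 1) (a b : ZMod 3) :
    t = ((if t = 1 ∧ a = 0 then (1:ℤ) else if t = -1 ∧ b = 0 then -1 else 0)
        + (if t = 1 ∧ a = 1 then (1:ℤ) else if t = -1 ∧ b = 1 then -1 else 0))
        + (if t = 1 ∧ a = 2 then (1:ℤ) else if t = -1 ∧ b = 2 then -1 else 0) := by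
  rcases ht with rfl | rfl | rfl <;> (revert b; revert a; decide)

theorem aux_disj (t : ℤ) (ht : t = -1 ∨ t = 0 ∨ t = 1) (a b : ZMod 3) :
    ((if t = 1 ∧ a = 0 then (1:ℤ) else if t = -1 ∧ b = 0 then -1 else 0) = 0
      ∧ (if t = 1 ∧ a = 1 then (1:ℤ) else if t = -1 ∧ b = 1 then -1 else 0) = 0)
    ∨ ((if t = 1 ∧ a = 0 then (1:ℤ) else if t = -1 ∧ b = 0 then -1 else 0) = 0
      ∧ (if t = 1 ∧ a = 2 then (1:ℤ) else if t = -1 ∧ b = 2 then -1 else 0) = 0)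
    ∨ ((if t = 1 ∧ a = 1 then (1:ℤ) else if t = -1 ∧ b = 1 then -1 else 0) = 0
      ∧ (if t = 1 ∧ a = 2 then (1:ℤ) else if t = -1 ∧ b = 2 then -1 else 0) = 0) := by
  rcases ht with rfl | rfl | rfl <;> (revert b; revert a; decide)

theorem aux_hom (t : ℤ) (ht : t = -1 ∨ t = 0 ∨ t = 1) (a b i j : ZMod 3) (hj : j = i + 1)
    (key : (t : ZMod 3) = a - b) :
    (if t = 1 ∧ a = i then (1:ℤ) else if t = -1 ∧ b = i then -1 else 0)
      - (if t = 1 ∧ a = j then (1:ℤ) else if t = -1 ∧ b = j then -1 else 0)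
    = (if a = i then (1:ℤ) else 0) - (if b = i then (1:ℤ) else 0) := by
  subst hj
  rcases ht with rfl | rfl | rfl <;> (revert key; revert i; revert b; revert a; decide)

end AuxCases

/-!
STATEMENT 14: An oriented subgraph T of a map G on an orientable surface is partitionable
if and only if it is a topological Tutte-orientation.
-/

theorem partitionable_iff_topologicalTutte {V E F : Type} [Fintype E] [DecidableEq E]
    [DecidableEq F]
    (M : SurfaceMap V E F) (hM : M.GoodFacialWalks)
    (T : E → ℤ) (hT : IsSubgraphFlow T) :
    Partitionable M T ↔ IsTopologicalTutte M T := by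
  constructor
  · rintro ⟨T0, T1, T2, _, _, _, hsum, _, h01, h12⟩ W hW
    have hz1 : beta (T0 - T1) (charFlow W) = 0 := beta_facialSubgroup_closed M hM h01 hW
    have hz2 : beta (T1 - T2) (charFlow W) = 0 := beta_facialSubgroup_closed M hM h12 hW
    rw [beta_sub_left] at hz1 hz2
    have hT' : beta T (charFlow W)
        = beta T0 (charFlow W) + beta T1 (charFlow W) + beta T2 (charFlow W) := by
      simp only [beta]
      rw [← Finset.sum_add_distrib, ← Finset.sum_add_distrib]
      exact Finset.sum_congr rfl fun e _ => by rw [hsum e]; ring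
    rw [Int.modEq_zero_iff_dvd]
    exact ⟨beta T1 (charFlow W), by omega⟩
  · intro hTutte
    classical
    -- Step 1: build a "potential" r : F → ZMod 3 with T e ≡ r(left e) - r(right e).
    obtain ⟨r, key⟩ : ∃ r : F → ZMod 3,
        ∀ e, (T e : ZMod 3) = r (M.leftFace e) - r (M.rightFace e) := by
      have hreach : ∀ f : F, ∃ l,
          M.dual.IsWalk ((Quotient.mk M.dual.reachSetoid f).out) f l :=
        fun f => Quotient.mk_out (s := M.dual.reachSetoid) f
      choose wk hwk using hreach
      refine ⟨fun f => ((beta T (charFlow (wk f)) : ℤ) : ZMod 3), fun e => ?_⟩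
      dsimp only
      have hadj : M.dual.reachSetoid (M.leftFace e) (M.rightFace e) :=
        ⟨[(e, false)], ⟨rfl, rfl⟩⟩
      have hrep : (Quotient.mk M.dual.reachSetoid (M.leftFace e)).out
          = (Quotient.mk M.dual.reachSetoid (M.rightFace e)).out :=
        congrArg Quotient.out (Quotient.sound hadj)
      have hWalk : M.dual.IsWalk ((Quotient.mk M.dual.reachSetoid (M.rightFace e)).out)
          ((Quotient.mk M.dual.reachSetoid (M.rightFace e)).out)
          (wk (M.rightFace e) ++ (e, true) :: Multigraph.revWalk (wk (M.leftFace e))) := by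
        refine (hwk (M.rightFace e)).append ⟨rfl, ?_⟩
        have h2 := (hwk (M.leftFace e)).rev
        rw [hrep] at h2
        exact h2
      have h0 := hTutte _ (hWalk.isClosedWalk (by simp))
      have hchar : charFlow (wk (M.rightFace e) ++ (e, true)
            :: Multigraph.revWalk (wk (M.leftFace e)))
          = charFlow (wk (M.rightFace e)) + (charFlow [(e, true)]
              + -charFlow (wk (M.leftFace e))) := by
        rw [show (e, true) :: Multigraph.revWalk (wk (M.leftFace e))
            = [(e, true)] ++ Multigraph.revWalk (wk (M.leftFace e)) from rfl,
          charFlow_append, charFlow_append, charFlow_revWalk]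
      rw [hchar, beta_add_right, beta_add_right, beta_neg_right, beta_charFlow_single] at h0
      have hz := (ZMod.intCast_eq_intCast_iff _ _ 3).2 h0
      push_cast at hz
      linear_combination hz
    -- Step 2: assemble the partition from r.
    set S : Finset F := Finset.image M.leftFace Finset.univ
        ∪ Finset.image M.rightFace Finset.univ with hS
    have hLS : ∀ e, M.leftFace e ∈ S := fun e =>
      Finset.mem_union_left _ (Finset.mem_image_of_mem _ (Finset.mem_univ e))
    have hRS : ∀ e, M.rightFace e ∈ S := fun e =>
      Finset.mem_union_right _ (Finset.mem_image_of_mem _ (Finset.mem_univ e))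
    have hBmem : ∀ i : ZMod 3,
        (∑ f ∈ S.filter (fun f => r f = i), charFlow (M.facialWalk f)) ∈ M.FacialSubgroup :=
      fun i => AddSubgroup.sum_mem _ fun f _ => AddSubgroup.subset_closure ⟨f, rfl⟩
    have hBe : ∀ (i : ZMod 3) (e : E),
        (∑ f ∈ S.filter (fun f => r f = i), charFlow (M.facialWalk f)) e
          = (if r (M.leftFace e) = i then (1:ℤ) else 0)
            - (if r (M.rightFace e) = i then (1:ℤ) else 0) := by
      intro i e
      rw [Finset.sum_apply]
      rw [Finset.sum_congr rfl (fun f _ => hM.2 f e)]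
      rw [Finset.sum_sub_distrib, Finset.sum_ite_eq, Finset.sum_ite_eq]
      simp [Finset.mem_filter, hLS e, hRS e]
    refine ⟨fun e => if T e = 1 ∧ r (M.leftFace e) = 0 then 1
        else if T e = -1 ∧ r (M.rightFace e) = 0 then -1 else 0,
      fun e => if T e = 1 ∧ r (M.leftFace e) = 1 then 1
        else if T e = -1 ∧ r (M.rightFace e) = 1 then -1 else 0,
      fun e => if T e = 1 ∧ r (M.leftFace e) = 2 then 1
        else if T e = -1 ∧ r (M.rightFace e) = 2 then -1 else 0,
      ?_, ?_, ?_, ?_, ?_, ?_, ?_⟩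
    · intro e; dsimp only; split_ifs <;> simp
    · intro e; dsimp only; split_ifs <;> simp
    · intro e; dsimp only; split_ifs <;> simp
    · intro e; exact aux_sum (T e) (hT e) (r (M.leftFace e)) (r (M.rightFace e))
    · intro e; exact aux_disj (T e) (hT e) (r (M.leftFace e)) (r (M.rightFace e))
    · show _ - _ ∈ M.FacialSubgroup
      have heq : (fun e => if T e = 1 ∧ r (M.leftFace e) = 0 then (1:ℤ)
              else if T e = -1 ∧ r (M.rightFace e) = 0 then -1 else 0)
          - (fun e => if T e = 1 ∧ r (M.leftFace e) = 1 then (1:ℤ)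
              else if T e = -1 ∧ r (M.rightFace e) = 1 then -1 else 0)
          = ∑ f ∈ S.filter (fun f => r f = 0), charFlow (M.facialWalk f) := by
        funext e
        rw [Pi.sub_apply, hBe]
        exact aux_hom (T e) (hT e) _ _ 0 1 (by decide) (key e)
      rw [heq]
      exact hBmem 0
    · show _ - _ ∈ M.FacialSubgroup
      have heq : (fun e => if T e = 1 ∧ r (M.leftFace e) = 1 then (1:ℤ)
              else if T e = -1 ∧ r (M.rightFace e) = 1 then -1 else 0)
          - (fun e => if T e = 1 ∧ r (M.leftFace e) = 2 then (1:ℤ)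
              else if T e = -1 ∧ r (M.rightFace e) = 2 then -1 else 0)
          = ∑ f ∈ S.filter (fun f => r f = 1), charFlow (M.facialWalk f) := by
        funext e
        rw [Pi.sub_apply, hBe]
        exact aux_hom (T e) (hT e) _ _ 1 2 (by decide) (key e)
      rw [heq]
      exact hBmem 1
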